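/- For n ≥ 0, the coefficient expansion T_n^{(r,k)}(x|λ) = Σ_{l=0}^{n} [Σ_{j=l}^{n} Σ_{m=0}^{n-j} (-1)^{n-m-j} C(n,j) C(j,l) m!/(m+1)^k · H_{j-l}^{(r)}(λ) S₂(n-j,m)] x^l holds. -/

import Mathlib

open PowerSeries Finset

/-- e^{xt} as a formal power series. -/
noncomputable def expX (x : ℂ) : PowerSeries ℂ := rescale x (exp ℂ)

/-- 1 - e^{-t} as a formal power series. -/
noncomputable def oneSubExpNeg : PowerSeries ℂ := 1 - rescale (-1) (exp ℂ)

/-- Li_k(1-e^{-t}) = Σ_{m≥1} (1-e^{-t})^m / m^k as a formal power series. -/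
noncomputable def polyLogC (k : ℤ) : PowerSeries ℂ :=
  mk fun n => ∑ m ∈ Finset.Icc 1 n, (coeff n (oneSubExpNeg ^ m)) * ((m : ℂ) ^ k)⁻¹

/-- integer power of a power series (inverse via `PowerSeries.inv`). -/
noncomputable def zpowS (f : PowerSeries ℂ) (r : ℤ) : PowerSeries ℂ :=
  f ^ r.toNat * (f⁻¹) ^ (-r).toNat

/-- (1-λ)/(e^t-λ). -/
noncomputable def feBase (l : ℂ) : PowerSeries ℂ :=
  C (1 - l) * (exp ℂ - C l)⁻¹

/-- exponential generating function Σ f(n) t^n/n!. -/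
noncomputable def GF (f : ℕ → ℂ) : PowerSeries ℂ := mk fun n => f n / n.factorial

/-- Stirling numbers of the second kind: (e^t-1)^m = m! Σ_l S2(l,m) t^l/l!. -/
noncomputable def S2 (n m : ℕ) : ℂ :=
  (n.factorial : ℂ) / (m.factorial : ℂ) * coeff n ((exp ℂ - 1) ^ m)

lemma coeff_expC (n : ℕ) : coeff n (exp ℂ) = (n.factorial : ℂ)⁻¹ := by
  rw [coeff_exp]; push_cast; simp [map_inv₀]

lemma coeff_expX (x : ℂ) (n : ℕ) : coeff n (expX x) = x ^ n / n.factorial := by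
  rw [expX, coeff_rescale, coeff_expC, div_eq_mul_inv]

lemma hA0 : constantCoeff oneSubExpNeg = 0 := by
  have := coeff_rescale (exp ℂ) (-1 : ℂ) 0
  simp [oneSubExpNeg, map_sub, ← coeff_zero_eq_constantCoeff, this, coeff_expC]

lemma hAne : oneSubExpNeg ≠ 0 := by
  intro h
  have : coeff 1 oneSubExpNeg = 0 := by rw [h]; simp
  rw [oneSubExpNeg, map_sub, coeff_rescale, coeff_expC] at this
  norm_num at this

lemma A_eq : oneSubExpNeg = - rescale (-1 : ℂ) (exp ℂ - 1) := by
  rw [oneSubExpNeg, map_sub, map_one]; ring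

lemma coeff_A_pow (q m : ℕ) :
    coeff q (oneSubExpNeg ^ m) = (-1 : ℂ) ^ (q + m) * coeff q ((exp ℂ - 1) ^ m) := by
  rw [A_eq, neg_pow, ← map_pow, show ((-1 : ℂ⟦X⟧)) = C (-1) by simp,
    ← map_pow C, coeff_C_mul, coeff_rescale, pow_add]
  ring

lemma coeff_A_pow_zero {q m : ℕ} (h : q < m) : coeff q (oneSubExpNeg ^ m) = 0 := by
  have hX : (X : PowerSeries ℂ) ∣ oneSubExpNeg := X_dvd_iff.mpr hA0
  exact X_pow_dvd_iff.mp (pow_dvd_pow_of_dvd hX m) q h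

noncomputable def Qser (k : ℤ) : PowerSeries ℂ :=
  mk fun q => ∑ m ∈ range (q + 1), (coeff q (oneSubExpNeg ^ m)) * ((((m : ℂ) + 1)) ^ k)⁻¹

lemma polyLog_eq (k : ℤ) : polyLogC k = oneSubExpNeg * Qser k := by
  ext n
  rw [coeff_mul, Finset.Nat.sum_antidiagonal_eq_sum_range_succ_mk]
  have h1 : ∀ i ∈ range (n + 1),
      coeff i oneSubExpNeg * coeff (n - i) (Qser k)
        = ∑ m ∈ range (n + 1),
            coeff i oneSubExpNeg * ((coeff (n - i) (oneSubExpNeg ^ m)) * ((((m : ℂ) + 1)) ^ k)⁻¹) := by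
    intro i hi
    rw [Qser, coeff_mk, Finset.mul_sum]
    apply Finset.sum_subset
    · intro m hm
      simp only [mem_range] at hm ⊢
      omega
    · intro m _ hm
      simp only [mem_range, not_lt] at hm
      rw [coeff_A_pow_zero (by omega)]
      ring
  rw [Finset.sum_congr rfl h1, Finset.sum_comm]
  have h2 : ∀ m ∈ range (n + 1),
      (∑ i ∈ range (n + 1),
        coeff i oneSubExpNeg * ((coeff (n - i) (oneSubExpNeg ^ m)) * ((((m : ℂ) + 1)) ^ k)⁻¹))
      = coeff n (oneSubExpNeg ^ (m + 1)) * ((((m : ℂ) + 1)) ^ k)⁻¹ := by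
    intro m _
    rw [pow_succ', coeff_mul, Finset.Nat.sum_antidiagonal_eq_sum_range_succ_mk, Finset.sum_mul]
    exact Finset.sum_congr rfl fun i _ => by ring
  rw [Finset.sum_congr rfl h2]
  rw [polyLogC, coeff_mk]
  have h3 : ∑ m ∈ Finset.Icc 1 n, (coeff n (oneSubExpNeg ^ m)) * ((m : ℂ) ^ k)⁻¹
      = ∑ m ∈ range n, (coeff n (oneSubExpNeg ^ (m + 1))) * ((((m : ℂ) + 1)) ^ k)⁻¹ := by
    rw [show Finset.Icc 1 n = Finset.Ico 1 (n + 1) by rfl, Finset.sum_Ico_eq_sum_range]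
    simp only [Nat.add_sub_cancel]
    refine Finset.sum_congr rfl fun m _ => by
      rw [Nat.add_comm 1 m]
      push_cast
      ring_nf
  rw [h3, Finset.sum_range_succ, coeff_A_pow_zero (by omega)]
  simp

theorem stmt5 (lam : ℂ) (hlam : lam ≠ 1) (r k : ℤ) (T H : ℕ → ℂ → ℂ)
    (hT : ∀ x : ℂ, oneSubExpNeg * GF (fun n => T n x)
        = zpowS (feBase lam) (r) * polyLogC (k) * expX x)
    (hH : ∀ x : ℂ, GF (fun n => H n x) = zpowS (feBase lam) r * expX x) :
    ∀ (n : ℕ) (x : ℂ),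
      T n x = ∑ i ∈ range (n + 1),
        (∑ j ∈ Finset.Icc i n, ∑ m ∈ range (n - j + 1),
          (-1 : ℂ) ^ (n - m - j) * (n.choose j : ℂ) * (j.choose i : ℂ) *
            ((m.factorial : ℂ) * (((m : ℂ) + 1) ^ k)⁻¹) * H (j - i) 0 * S2 (n - j) m) * x ^ i := by
  intro n x
  have hexpX0 : expX 0 = 1 := by
    rw [expX, rescale_zero]
    simp [constantCoeff_exp]
  have hGFH := hH 0
  rw [hexpX0, mul_one] at hGFH
  have key : GF (fun n => T n x) = expX x * (GF (fun n => H n 0) * Qser k) := by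
    apply mul_left_cancel₀ hAne
    rw [hT x, ← hGFH, polyLog_eq]
    ring
  have hfac : ∀ m : ℕ, (m.factorial : ℂ) ≠ 0 := fun m => Nat.cast_ne_zero.mpr m.factorial_ne_zero
  have hTn : T n x = coeff n (GF fun n => T n x) * n.factorial := by
    rw [GF, coeff_mk, div_mul_cancel₀ _ (hfac n)]
  rw [hTn, key]
  have hc : coeff n (expX x * (GF (fun n => H n 0) * Qser k))
      = ∑ i ∈ range (n + 1), (x ^ i / i.factorial) *
          ∑ p ∈ range (n - i + 1), (H p 0 / p.factorial) *
            ∑ m ∈ range (n - i - p + 1),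
              coeff (n - i - p) (oneSubExpNeg ^ m) * ((((m : ℂ) + 1)) ^ k)⁻¹ := by
    rw [coeff_mul, Finset.Nat.sum_antidiagonal_eq_sum_range_succ_mk]
    refine Finset.sum_congr rfl fun i hi => ?_
    rw [coeff_expX, coeff_mul, Finset.Nat.sum_antidiagonal_eq_sum_range_succ_mk]
    congr 1
    refine Finset.sum_congr rfl fun p hp => ?_
    rw [GF, coeff_mk, Qser, coeff_mk]
  rw [hc, Finset.sum_mul]
  refine Finset.sum_congr rfl fun i hi => ?_
  rw [mem_range] at hi
  have hin : i ≤ n := by omega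
  rw [show Finset.Icc i n = Finset.Ico i (n + 1) by rfl, Finset.sum_Ico_eq_sum_range,
    show n + 1 - i = n - i + 1 by omega]
  simp only [Finset.mul_sum, Finset.sum_mul]
  refine Finset.sum_congr rfl fun p hp => ?_
  rw [mem_range] at hp
  rw [show n - (i + p) = n - i - p by omega]
  refine Finset.sum_congr rfl fun m hm => ?_
  rw [mem_range] at hm
  set q : ℕ := n - i - p with hq
  have hjp : i + p - i = p := by omega
  have hsub : n - m - (i + p) = q - m := by omega
  have hsign : (-1 : ℂ) ^ (q - m) = (-1 : ℂ) ^ (q + m) := by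
    rw [show q + m = (q - m) + 2 * m by omega, pow_add, pow_mul]
    norm_num
  have hnat : (n.choose (i + p)) * ((i + p).choose i) * (i.factorial * p.factorial * q.factorial)
      = n.factorial := by
    have h1 := Nat.choose_mul_factorial_mul_factorial (Nat.le_add_right i p)
    rw [Nat.add_sub_cancel_left] at h1
    have h2 := Nat.choose_mul_factorial_mul_factorial (show i + p ≤ n by omega)
    rw [show n - (i + p) = q by omega] at h2
    calc (n.choose (i + p)) * ((i + p).choose i) * (i.factorial * p.factorial * q.factorial)
        = (n.choose (i + p)) * (((i + p).choose i) * i.factorial * p.factorial) * q.factorial := by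
          ring
      _ = (n.choose (i + p)) * (i + p).factorial * q.factorial := by rw [h1]
      _ = n.factorial := h2
  have hcast : ((n.choose (i + p) : ℂ)) * ((i + p).choose i : ℂ) *
      ((i.factorial : ℂ) * (p.factorial : ℂ) * (q.factorial : ℂ)) = (n.factorial : ℂ) := by
    exact_mod_cast congrArg (Nat.cast : ℕ → ℂ) hnat
  rw [hjp, hsub, hsign, coeff_A_pow, S2, show (n.factorial : ℂ) = _ from hcast.symm]
  have h1 := hfac i
  have h2 := hfac p
  have h3 := hfac m
  have hk : ((m : ℂ) + 1) ^ k ≠ 0 := zpow_ne_zero _ (by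
    have : ((m : ℂ) + 1) = ((m + 1 : ℕ) : ℂ) := by push_cast; ring
    rw [this]
    exact_mod_cast Nat.succ_ne_zero m)
  field_simp
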